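/- For the one-dimensional Schelling process with τ ≤ 1/2 on n nodes with window w, the harmony index is bounded above by n(2w+1), and since it strictly increases by at least 1 with every swap that occurs, the total number of stages at which a swap occurs is at most n(2w+1); in particular the process terminates. -/

import Mathlib

/-- The harmony index: the sum over all nodes `u` of the number of nodes in
the neighbourhood `[u-w, u+w]` having the same type as `u`. -/
noncomputable def harmonyIndex (n w : ℕ) [NeZero n] (c : ZMod n → Bool) : ℕ :=
  ∑ u : ZMod n,
    ((Finset.Icc (-(w:ℤ)) (w:ℤ)).filter (fun i : ℤ => c (u + (i : ZMod n)) = c u)).card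

theorem schelling_process_terminates
    (n w : ℕ) [NeZero n] (τ : ℝ) (hτ : τ ≤ 1/2)
    (c : ℕ → ZMod n → Bool) (swapStage : ℕ → Prop)
    (hmono : ∀ s, harmonyIndex n w (c s) ≤ harmonyIndex n w (c (s+1)))
    (hswap : ∀ s, swapStage s → harmonyIndex n w (c s) < harmonyIndex n w (c (s+1))) :
    (∀ s, harmonyIndex n w (c s) ≤ n * (2*w+1)) ∧
    ∀ S : Finset ℕ, (∀ s ∈ S, swapStage s) → S.card ≤ n * (2*w+1) := by
  have hbound : ∀ s, harmonyIndex n w (c s) ≤ n * (2*w+1) := by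
    intro s
    have : harmonyIndex n w (c s) ≤ ∑ _u : ZMod n, (2*w+1) := by
      apply Finset.sum_le_sum
      intro u _
      calc ((Finset.Icc (-(w:ℤ)) (w:ℤ)).filter
              (fun i : ℤ => c s (u + (i : ZMod n)) = c s u)).card
          ≤ (Finset.Icc (-(w:ℤ)) (w:ℤ)).card := Finset.card_filter_le _ _
        _ = 2*w+1 := by
            rw [Int.card_Icc]
            simp [two_mul]
            omega
    simpa [ZMod.card] using this
  refine ⟨hbound, ?_⟩
  intro S hS
  have key : ∀ t : ℕ, (S.filter (· < t)).card ≤ harmonyIndex n w (c t) := by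
    intro t
    induction t with
    | zero => simp
    | succ t ih =>
      by_cases ht : t ∈ S
      · have hfil : S.filter (· < t + 1) = insert t (S.filter (· < t)) := by
          ext x
          simp only [Finset.mem_filter, Finset.mem_insert]
          constructor
          · rintro ⟨hx, hlt⟩
            rcases Nat.lt_succ_iff_lt_or_eq.mp hlt with h | h
            · exact Or.inr ⟨hx, h⟩
            · exact Or.inl h
          · rintro (rfl | ⟨hx, hlt⟩)
            · exact ⟨ht, Nat.lt_succ_self _⟩
            · exact ⟨hx, Nat.lt_succ_of_lt hlt⟩
        rw [hfil]
        have : (insert t (S.filter (· < t))).card ≤ (S.filter (· < t)).card + 1 :=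
          Finset.card_insert_le _ _
        have hstrict := hswap t (hS t ht)
        omega
      · have hfil : S.filter (· < t + 1) = S.filter (· < t) := by
          ext x
          simp only [Finset.mem_filter]
          constructor
          · rintro ⟨hx, hlt⟩
            refine ⟨hx, ?_⟩
            rcases Nat.lt_succ_iff_lt_or_eq.mp hlt with h | rfl
            · exact h
            · exact absurd hx ht
          · rintro ⟨hx, hlt⟩
            exact ⟨hx, Nat.lt_succ_of_lt hlt⟩
        rw [hfil]
        exact ih.trans (hmono t)
  rcases S.eq_empty_or_nonempty with rfl | hne
  · simp
  · obtain ⟨m, hm⟩ := S.exists_max_image id hne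
    have hfull : S.filter (· < m + 1) = S := by
      apply Finset.filter_true_of_mem
      intro x hx
      exact Nat.lt_succ_of_le (hm.2 x hx)
    have := key (m + 1)
    rw [hfull] at this
    exact this.trans (hbound (m + 1))
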